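/- For every ℓ ≥ 1, D_k(ℓ) ≤ k^{ℓ−1}: every permutation attainable from k^ℓ chips has longest strictly decreasing subsequence of length at most k^{ℓ−1}. -/

import Mathlib

/-- A firing step for `N` labeled chips on the infinite directed `k`-ary tree with
vertex set `{1, 2, 3, …}`, root `1`, where the `j`-th child (`1 ≤ j ≤ k`) of vertex `v`
is `k*(v-1)+j+1`.  A configuration assigns to each chip (element of `Fin N`,
representing labels `1,…,N`) a vertex.  A step picks `k` chips `t 0 < t 1 < ⋯ < t (k-1)`
all on a common vertex `v` and sends the `j`-th smallest to the `j`-th child. -/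
def FireStep (k N : ℕ) (c c' : Fin N → ℕ) : Prop :=
  ∃ (v : ℕ) (t : Fin k → Fin N),
    StrictMono t ∧
    (∀ j, c (t j) = v) ∧
    (∀ j : Fin k, c' (t j) = k * (v - 1) + (j : ℕ) + 2) ∧
    (∀ i : Fin N, (∀ j, i ≠ t j) → c' i = c i)

/-- Reachable from the initial configuration of `k^ℓ` chips all on the root. -/
def Reachable (k ℓ : ℕ) (c : Fin (k ^ ℓ) → ℕ) : Prop :=
  Relation.ReflTransGen (FireStep k (k ^ ℓ)) (fun _ => 1) c

/-- A configuration is stable if every vertex holds fewer than `k` chips. -/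
def Stable (k N : ℕ) (c : Fin N → ℕ) : Prop :=
  ∀ v : ℕ, (Finset.univ.filter (fun i => c i = v)).card < k

/-- `layerStart k m` is the leftmost (smallest-numbered) vertex on layer `m+1`;
the vertices of layer `m+1` read left to right are `layerStart k m + p` for `0 ≤ p < k^m`. -/
def layerStart (k : ℕ) : ℕ → ℕ
  | 0 => 1
  | m + 1 => k * (layerStart k m - 1) + 2

/-- `σ` is the permutation associated to some reachable stable configuration of `k^ℓ`
chips: `σ p` (0-based, representing label `σ p + 1`) is the chip on the `p`-th leftmost
vertex of layer `ℓ+1`. -/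
def Attainable (k ℓ : ℕ) (σ : Equiv.Perm (Fin (k ^ ℓ))) : Prop :=
  ∃ c : Fin (k ^ ℓ) → ℕ, Reachable k ℓ c ∧ Stable k (k ^ ℓ) c ∧
    ∀ p : Fin (k ^ ℓ), c (σ p) = layerStart k ℓ + (p : ℕ)

/-- `f : Fin M → ℕ` has a strictly decreasing subsequence of length `d`. -/
def HasDecSubseq (M : ℕ) (f : Fin M → ℕ) (d : ℕ) : Prop :=
  ∃ pos : Fin d → Fin M, StrictMono pos ∧ StrictAnti (fun t => f (pos t))

/-- `Dmax k ℓ` : the maximum, over all permutations attainable from `k^ℓ` chips, of the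
length of the longest strictly decreasing subsequence. -/
noncomputable def Dmax (k ℓ : ℕ) : ℕ :=
  sSup {d | ∃ σ : Equiv.Perm (Fin (k ^ ℓ)), Attainable k ℓ σ ∧
    HasDecSubseq (k ^ ℓ) (fun p => (σ p : ℕ)) d}

namespace CFAux

def childf (k v j : ℕ) : ℕ := k * (v - 1) + j + 2

def par (k v : ℕ) : ℕ := (v - 2) / k + 1

def InSub (k w v : ℕ) : Prop := ∃ n, (par k)^[n] v = w

lemma par_pos (k v : ℕ) : 1 ≤ par k v := Nat.le_add_left 1 _

lemma par_le {k v : ℕ} (hv : 1 ≤ v) : par k v ≤ v := by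
  unfold par
  have : (v - 2) / k ≤ v - 2 := Nat.div_le_self _ _
  omega

lemma childf_gt {k v : ℕ} (hk : 1 ≤ k) (hv : 1 ≤ v) (j : ℕ) : v < childf k v j := by
  unfold childf
  have : 1 * (v - 1) ≤ k * (v - 1) := Nat.mul_le_mul_right _ hk
  omega

lemma childf_ge_two (k v j : ℕ) : 2 ≤ childf k v j := by unfold childf; omega

lemma par_childf {k v j : ℕ} (hk : 0 < k) (hv : 1 ≤ v) (hj : j < k) :
    par k (childf k v j) = v := by
  unfold par childf
  have h1 : k * (v - 1) + j + 2 - 2 = k * (v - 1) + j := by omega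
  rw [h1, Nat.mul_add_div hk]
  have : j / k = 0 := Nat.div_eq_of_lt hj
  omega

lemma insub_iff {k w v : ℕ} : InSub k w v ↔ v = w ∨ InSub k w (par k v) := by
  constructor
  · rintro ⟨n, hn⟩
    cases n with
    | zero => exact Or.inl hn
    | succ n => exact Or.inr ⟨n, by rwa [Function.iterate_succ_apply] at hn⟩
  · rintro (rfl | ⟨n, hn⟩)
    · exact ⟨0, rfl⟩
    · exact ⟨n + 1, by rwa [Function.iterate_succ_apply]⟩

lemma insub_refl (k v : ℕ) : InSub k v v := ⟨0, rfl⟩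

lemma insub_child {k v w j : ℕ} (hk : 0 < k) (hv : 1 ≤ v) (hj : j < k)
    (h : InSub k w v) : InSub k w (childf k v j) :=
  insub_iff.2 (Or.inr (by rwa [par_childf hk hv hj]))

lemma insub_trans {k u w v : ℕ} (h1 : InSub k w v) (h2 : InSub k u w) : InSub k u v := by
  obtain ⟨n, hn⟩ := h1; obtain ⟨m, hm⟩ := h2
  exact ⟨m + n, by rw [Function.iterate_add_apply, hn, hm]⟩

lemma iterate_par_le {k v : ℕ} (hv : 1 ≤ v) :
    ∀ n, (par k)^[n] v ≤ v ∧ 1 ≤ (par k)^[n] v := by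
  intro n
  induction n with
  | zero => exact ⟨le_rfl, hv⟩
  | succ n ih =>
    rw [Function.iterate_succ_apply']
    exact ⟨le_trans (par_le ih.2) ih.1, par_pos _ _⟩

lemma insub_le {k w v : ℕ} (hv : 1 ≤ v) (h : InSub k w v) : w ≤ v := by
  obtain ⟨n, rfl⟩ := h; exact (iterate_par_le hv n).1

lemma insub_comparable {k a b x : ℕ} (ha : InSub k a x) (hb : InSub k b x) :
    InSub k a b ∨ InSub k b a := by
  obtain ⟨n, hn⟩ := ha; obtain ⟨m, hm⟩ := hb
  rcases le_total n m with h | h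
  · right
    refine ⟨m - n, ?_⟩
    rw [← hn, ← Function.iterate_add_apply, ← hm]
    congr 1; omega
  · left
    refine ⟨n - m, ?_⟩
    rw [← hm, ← Function.iterate_add_apply, ← hn]
    congr 1; omega

lemma childf_inj {k v a b : ℕ} (h : childf k v a = childf k v b) : a = b := by
  unfold childf at h; omega

lemma sibling_disjoint {k u i j x : ℕ} (hk : 1 ≤ k) (hu : 1 ≤ u) (hi : i < k) (hj : j < k)
    (hij : i ≠ j) (hx : InSub k (childf k u i) x) (hy : InSub k (childf k u j) x) : False := by
  have key : ∀ a b : ℕ, a < k → b < k → a ≠ b → InSub k (childf k u a) (childf k u b) → False := by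
    rintro a b ha hb hab ⟨n, hn⟩
    cases n with
    | zero => exact hab (childf_inj hn.symm)
    | succ n =>
      rw [Function.iterate_succ_apply, par_childf (by omega) hu hb] at hn
      have h1 : childf k u a ≤ u := insub_le hu ⟨n, hn⟩
      have h2 := childf_gt hk hu a
      omega
  rcases insub_comparable hx hy with h | h
  · exact key i j hi hj hij h
  · exact key j i hj hi (Ne.symm hij) h

open Classical in
noncomputable def sfilter (k : ℕ) {N : ℕ} (c : Fin N → ℕ) (w : ℕ) : Finset (Fin N) :=
  Finset.univ.filter (fun i => InSub k w (c i))

lemma mem_sfilter {k N : ℕ} {c : Fin N → ℕ} {w : ℕ} {i : Fin N} :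
    i ∈ sfilter k c w ↔ InSub k w (c i) := by
  simp [sfilter]

noncomputable def scount (k : ℕ) {N : ℕ} (c : Fin N → ℕ) (w : ℕ) : ℕ := (sfilter k c w).card

def Bal (k : ℕ) {N : ℕ} (c : Fin N → ℕ) : Prop :=
  ∀ v, 1 ≤ v → ∀ j, j < k → scount k c (childf k v j) = scount k c (childf k v 0)

def Ord (k ℓ : ℕ) {N : ℕ} (c : Fin N → ℕ) : Prop :=
  ∀ (a b : Fin N) (q r : ℕ), q < r → r < k ^ ℓ → q / k = r / k →
    c a = layerStart k ℓ + q → c b = layerStart k ℓ + r → a < b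

def Inv (k ℓ : ℕ) {N : ℕ} (c : Fin N → ℕ) : Prop :=
  (∀ i, 1 ≤ c i) ∧ Bal k c ∧ Ord k ℓ c

lemma L_pos (k m : ℕ) : 1 ≤ layerStart k m := by
  cases m <;> simp [layerStart]

lemma L_succ {k : ℕ} (hk : 1 ≤ k) : ∀ m, layerStart k (m + 1) = layerStart k m + k ^ m
  | 0 => by simp [layerStart]
  | m + 1 => by
    have ih := L_succ hk m
    have hp := L_pos k m
    obtain ⟨s, hs⟩ : ∃ s, layerStart k m = s + 1 := ⟨layerStart k m - 1, by omega⟩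
    have h3 : k * s + 2 = s + 1 + k ^ m := by
      have hih := ih
      simp only [layerStart] at hih
      rw [hs] at hih
      simpa using hih
    show k * (layerStart k (m + 1) - 1) + 2 = layerStart k (m + 1) + k ^ (m + 1)
    rw [ih, hs]
    have h1 : s + 1 + k ^ m - 1 = s + k ^ m := by omega
    rw [h1]
    calc k * (s + k ^ m) + 2 = (k * s + 2) + k ^ m * k := by rw [Nat.mul_add]; ring
      _ = s + 1 + k ^ m + k ^ (m + 1) := by rw [h3, pow_succ]

lemma L_mono {k : ℕ} (hk : 1 ≤ k) : Monotone (layerStart k) := by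
  apply monotone_nat_of_le_succ
  intro m
  rw [L_succ hk]
  omega

lemma L_ge {k : ℕ} (hk : 1 ≤ k) (m : ℕ) : m + 1 ≤ layerStart k m := by
  induction m with
  | zero => simp [layerStart]
  | succ m ih =>
    rw [L_succ hk]
    have : 1 ≤ k ^ m := Nat.one_le_pow _ _ (by omega)
    omega

lemma layer_unique {k a b x y : ℕ} (hk : 1 ≤ k) (hx : x < k ^ a) (hy : y < k ^ b)
    (h : layerStart k a + x = layerStart k b + y) : a = b := by
  have key : ∀ a b x y : ℕ, x < k ^ a → a < b → layerStart k a + x = layerStart k b + y → False := by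
    intro a b x y hx hab h
    have h1 : layerStart k a + x < layerStart k (a + 1) := by rw [L_succ hk]; omega
    have h2 : layerStart k (a + 1) ≤ layerStart k b := L_mono hk hab
    omega
  rcases Nat.lt_trichotomy a b with h' | h' | h'
  · exact absurd (key a b x y hx h' h) (by simp)
  · exact h'
  · exact absurd (key b a y x hy h' h.symm) (by simp)

lemma exists_layer {k v : ℕ} (hk : 1 ≤ k) (hv : 1 ≤ v) :
    ∃ m p, p < k ^ m ∧ v = layerStart k m + p := by
  set M := Nat.findGreatest (fun m => layerStart k m ≤ v) v with hM
  have h0 : layerStart k 0 ≤ v := by simpa [layerStart] using hv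
  have hle : layerStart k M ≤ v := Nat.findGreatest_spec (P := fun m => layerStart k m ≤ v) (Nat.zero_le v) h0
  have hlt : v < layerStart k (M + 1) := by
    by_contra h
    push_neg at h
    have hMv : M + 1 ≤ v := le_trans (by have := L_ge hk (M + 1); omega) h
    exact Nat.findGreatest_is_greatest (Nat.lt_succ_self M) hMv h
  refine ⟨M, v - layerStart k M, ?_, by omega⟩
  rw [L_succ hk] at hlt
  omega

lemma childf_layer {k m p j : ℕ} (hk : 1 ≤ k) :
    childf k (layerStart k m + p) j = layerStart k (m + 1) + (k * p + j) := by
  unfold childf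
  have hp := L_pos k m
  obtain ⟨s, hs⟩ : ∃ s, layerStart k m = s + 1 := ⟨layerStart k m - 1, by omega⟩
  show k * (layerStart k m + p - 1) + j + 2 = k * (layerStart k m - 1) + 2 + (k * p + j)
  rw [hs]
  have h1 : s + 1 + p - 1 = s + p := by omega
  have h2 : s + 1 - 1 = s := by omega
  rw [h1, h2]
  ring

lemma subtree_sum {k N u j : ℕ} {c : Fin N → ℕ} (hk : 2 ≤ k) (hbal : Bal k c)
    (hu : 1 ≤ u) (hj : j < k) :
    k * scount k c (childf k u j) ≤ scount k c u := by
  classical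
  have hsub : ∀ j' ∈ Finset.range k, sfilter k c (childf k u j') ⊆ sfilter k c u := by
    intro j' hj' i hi
    rw [mem_sfilter] at hi ⊢
    refine insub_trans hi ⟨1, ?_⟩
    rw [Function.iterate_one]
    exact par_childf (by omega) hu (Finset.mem_range.1 hj')
  have hdisj : ∀ j1 ∈ Finset.range k, ∀ j2 ∈ Finset.range k, j1 ≠ j2 →
      Disjoint (sfilter k c (childf k u j1)) (sfilter k c (childf k u j2)) := by
    intro j1 h1 j2 h2 h12
    rw [Finset.disjoint_left]
    intro i hi1 hi2
    rw [mem_sfilter] at hi1 hi2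
    exact sibling_disjoint (by omega) hu (Finset.mem_range.1 h1) (Finset.mem_range.1 h2) h12 hi1 hi2
  have hcard : ((Finset.range k).biUnion (fun j' => sfilter k c (childf k u j'))).card
      = ∑ j' ∈ Finset.range k, scount k c (childf k u j') := Finset.card_biUnion hdisj
  have hsum : ∑ j' ∈ Finset.range k, scount k c (childf k u j') = k * scount k c (childf k u j) := by
    rw [Finset.sum_congr rfl (fun j' hj' => hbal u hu j' (Finset.mem_range.1 hj'))]
    rw [hbal u hu j hj]
    simp [Finset.sum_const, Nat.smul_one_eq_cast]
  calc k * scount k c (childf k u j)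
      = ((Finset.range k).biUnion (fun j' => sfilter k c (childf k u j'))).card := by
        rw [hcard, hsum]
    _ ≤ (sfilter k c u).card := Finset.card_le_card (Finset.biUnion_subset.2 hsub)

lemma layer_bound {k N : ℕ} {c : Fin N → ℕ} (hk : 2 ≤ k) (hbal : Bal k c) :
    ∀ m q, q < k ^ m → k ^ m * scount k c (layerStart k m + q) ≤ N := by
  intro m
  induction m with
  | zero =>
    intro q hq
    have hq0 : q = 0 := by simpa using hq
    subst hq0
    simp only [pow_zero, one_mul, layerStart]
    calc scount k c 1 ≤ Finset.univ.card := Finset.card_le_card (Finset.subset_univ _)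
      _ = N := by simp
  | succ m ih =>
    intro q hq
    have hk0 : 0 < k := by omega
    have hu1 : 1 ≤ layerStart k m + q / k := le_trans (L_pos k m) (Nat.le_add_right _ _)
    have hqk : q / k < k ^ m := by
      rw [Nat.div_lt_iff_lt_mul hk0]
      rw [pow_succ] at hq
      exact hq
    have hchild : childf k (layerStart k m + q / k) (q % k) = layerStart k (m + 1) + q := by
      rw [childf_layer (by omega), Nat.div_add_mod]
    calc k ^ (m + 1) * scount k c (layerStart k (m + 1) + q)
        = k ^ m * (k * scount k c (childf k (layerStart k m + q / k) (q % k))) := by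
          rw [hchild, pow_succ]; ring
      _ ≤ k ^ m * scount k c (layerStart k m + q / k) :=
          Nat.mul_le_mul_left _ (subtree_sum hk hbal hu1 (Nat.mod_lt _ hk0))
      _ ≤ N := ih _ hqk

section Step

variable {k ℓ : ℕ} {c c' : Fin (k ^ ℓ) → ℕ}

lemma inv_step (hk : 2 ≤ k) (hℓ : 1 ≤ ℓ) (hinv : Inv k ℓ c)
    (hstep : FireStep k (k ^ ℓ) c c') : Inv k ℓ c' := by
  classical
  obtain ⟨hpos, hbal, hord⟩ := hinv
  obtain ⟨v, t, hmono, hct, hct', hrest⟩ := hstep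
  have hk0 : 0 < k := by omega
  have hk1 : 1 ≤ k := by omega
  have hv : 1 ≤ v := by
    have := hpos (t ⟨0, hk0⟩)
    rwa [hct ⟨0, hk0⟩] at this
  have hct'' : ∀ j : Fin k, c' (t j) = childf k v (j : ℕ) := fun j => hct' j
  have hbatch : ∀ i, (∃ j, i = t j) ∨ ((∀ j, i ≠ t j) ∧ c' i = c i) := by
    intro i
    by_cases h : ∃ j, i = t j
    · exact Or.inl h
    · push_neg at h
      exact Or.inr ⟨h, hrest i h⟩
  have hnotin : ∀ j : ℕ, ¬ InSub k (childf k v j) v := by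
    intro j h
    have h1 := insub_le hv h
    have h2 := childf_gt hk1 hv j
    omega
  -- chips at v
  have hcard_at : k ≤ (Finset.univ.filter (fun i => c i = v)).card := by
    have hinj : Function.Injective t := hmono.injective
    have himg : (Finset.univ.image t).card = k := by
      rw [Finset.card_image_of_injective _ hinj]
      simp
    have hsubimg : Finset.univ.image t ⊆ Finset.univ.filter (fun i => c i = v) := by
      intro i hi
      simp only [Finset.mem_image, Finset.mem_univ, true_and] at hi
      obtain ⟨j, rfl⟩ := hi
      simp [hct j]
    have hle := Finset.card_le_card hsubimg
    omega
  have hcard_in : k ≤ scount k c v := by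
    refine le_trans hcard_at (Finset.card_le_card ?_)
    intro i hi
    rw [mem_sfilter]
    rw [(Finset.mem_filter.1 hi).2]
    exact insub_refl k v
  obtain ⟨m, p, hpm, hvm⟩ := exists_layer hk1 hv
  have hmℓ : m + 1 ≤ ℓ := by
    have h1 : k ^ m * scount k c v ≤ k ^ ℓ := by
      rw [hvm]; exact layer_bound hk hbal m p hpm
    have h2 : k ^ m * k ≤ k ^ m * scount k c v := Nat.mul_le_mul_left _ hcard_in
    have h3 : k ^ (m + 1) ≤ k ^ ℓ := by rw [pow_succ]; omega
    exact (Nat.pow_le_pow_iff_right (by omega : 1 < k)).1 h3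
  -- filter change lemmas
  have hfilter_eq : ∀ w, InSub k w v → sfilter k c' w = sfilter k c w := by
    intro w hw
    ext i
    rw [mem_sfilter, mem_sfilter]
    rcases hbatch i with ⟨j, rfl⟩ | hi
    · rw [hct'' j, hct j]
      exact ⟨fun _ => hw, fun _ => insub_child hk0 hv j.isLt hw⟩
    · rw [hi.2]
  have hfilter_child : ∀ j : Fin k,
      sfilter k c' (childf k v (j : ℕ)) = insert (t j) (sfilter k c (childf k v (j : ℕ))) := by
    intro j
    ext i
    rw [mem_sfilter, Finset.mem_insert, mem_sfilter]
    rcases hbatch i with ⟨j', rfl⟩ | hi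
    · rw [hct'' j', hct j']
      constructor
      · intro h
        rcases insub_iff.1 h with heq | hpar
        · left
          have : (j' : ℕ) = (j : ℕ) := childf_inj heq
          exact congrArg t (Fin.ext this)
        · rw [par_childf hk0 hv j'.isLt] at hpar
          exact absurd hpar (hnotin _)
      · rintro (heq | h)
        · have : j' = j := hmono.injective heq
          subst this
          exact insub_refl _ _
        · exact absurd h (hnotin _)
    · rw [hi.2]
      constructor
      · exact fun h => Or.inr h
      · rintro (heq | h)
        · exact absurd heq (hi.1 j)
        · exact h
  have hfilter_other : ∀ w, ¬ InSub k w v → (∀ j : Fin k, childf k v (j : ℕ) ≠ w) →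
      sfilter k c' w = sfilter k c w := by
    intro w hw hch
    ext i
    rw [mem_sfilter, mem_sfilter]
    rcases hbatch i with ⟨j, rfl⟩ | hi
    · rw [hct'' j, hct j]
      constructor
      · intro h
        rcases insub_iff.1 h with heq | hpar
        · exact absurd heq (hch j)
        · rw [par_childf hk0 hv j.isLt] at hpar
          exact absurd hpar hw
      · intro h
        exact absurd h hw
    · rw [hi.2]
  have hscount_child : ∀ j : Fin k,
      scount k c' (childf k v (j : ℕ)) = scount k c (childf k v (j : ℕ)) + 1 := by
    intro j
    unfold scount
    rw [hfilter_child j]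
    rw [Finset.card_insert_of_notMem]
    rw [mem_sfilter, hct j]
    exact hnotin _
  refine ⟨?_, ?_, ?_⟩
  · -- positivity
    intro i
    rcases hbatch i with ⟨j, rfl⟩ | hi
    · rw [hct'' j]
      have := childf_ge_two k v (j : ℕ)
      omega
    · rw [hi.2]; exact hpos i
  · -- Bal
    intro u hu j hj
    by_cases huv : u = v
    · subst huv
      have e1 := hscount_child ⟨j, hj⟩
      have e0 := hscount_child ⟨0, hk0⟩
      simp only at e1 e0
      rw [e1, e0, hbal u hu j hj]
    · have hx : ∀ j' : ℕ, j' < k → scount k c' (childf k u j') = scount k c (childf k u j') := by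
        intro j' hj'
        by_cases h : InSub k (childf k u j') v
        · unfold scount; rw [hfilter_eq _ h]
        · unfold scount
          rw [hfilter_other _ h]
          intro jb heq
          have h1 := par_childf hk0 hv jb.isLt
          have h2 := par_childf hk0 hu hj'
          rw [heq, h2] at h1
          exact huv h1
      rw [hx j hj, hx 0 hk0]
      exact hbal u hu j hj
  · -- Ord
    intro a b q r hqr hrk hdiv ha hb
    rcases Nat.lt_or_ge (m + 1) ℓ with hmlt | hmge
    · -- firing strictly above layer ℓ
      have hnb : ∀ (i : Fin (k ^ ℓ)) (x : ℕ), x < k ^ ℓ → c' i = layerStart k ℓ + x →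
          c i = layerStart k ℓ + x := by
        intro i x hx hcx
        rcases hbatch i with ⟨j, rfl⟩ | hi
        · exfalso
          rw [hct'' j, hvm, childf_layer hk1] at hcx
          have hlt : k * p + (j : ℕ) < k ^ (m + 1) := by
            have h1 : k * (p + 1) ≤ k * k ^ m := Nat.mul_le_mul_left _ hpm
            rw [pow_succ]
            have h2 : k * p + (j : ℕ) < k * (p + 1) := by
              rw [Nat.mul_succ]
              exact Nat.add_lt_add_left j.isLt _
            calc k * p + (j : ℕ) < k * (p + 1) := h2
              _ ≤ k * k ^ m := h1
              _ = k ^ m * k := Nat.mul_comm _ _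
          have := layer_unique hk1 hlt hx hcx
          omega
        · rw [← hi.2]; exact hcx
      exact hord a b q r hqr hrk hdiv (hnb a q (lt_trans hqr hrk) ha) (hnb b r hrk hb)
    · -- firing at layer ℓ (parents of leaves)
      have hmeq : m + 1 = ℓ := le_antisymm hmℓ hmge
      have hsv : scount k c v ≤ k := by
        have h1 : k ^ m * scount k c v ≤ k ^ ℓ := by
          rw [hvm]; exact layer_bound hk hbal m p hpm
        have h2 : k ^ ℓ = k ^ m * k := by rw [← hmeq, pow_succ]
        exact Nat.le_of_mul_le_mul_left (h1.trans_eq h2) (pow_pos hk0 m)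
      have hchip_at : ∀ i, InSub k v (c i) → c i = v := by
        intro i hi
        have hsubs : Finset.univ.filter (fun i => c i = v) ⊆ sfilter k c v := by
          intro x hx
          rw [mem_sfilter, (Finset.mem_filter.1 hx).2]
          exact insub_refl k v
        have heq : Finset.univ.filter (fun i => c i = v) = sfilter k c v :=
          Finset.eq_of_subset_of_card_le hsubs (le_trans hsv hcard_at)
        have hmem : i ∈ sfilter k c v := mem_sfilter.2 hi
        rw [← heq] at hmem
        exact (Finset.mem_filter.1 hmem).2
      have hchildpos : ∀ j : ℕ, childf k v j = layerStart k ℓ + (k * p + j) := by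
        intro j
        rw [hvm, childf_layer hk1, hmeq]
      by_cases hba : ∃ ja, a = t ja
      · obtain ⟨ja, rfl⟩ := hba
        have hq' : q = k * p + (ja : ℕ) := by
          have : layerStart k ℓ + q = layerStart k ℓ + (k * p + (ja : ℕ)) := by
            rw [← ha, hct'' ja, hchildpos]
          omega
        have hdq : q / k = p := by
          rw [hq', Nat.mul_add_div hk0, Nat.div_eq_of_lt ja.isLt]
          omega
        have hdr : r / k = p := by rw [← hdiv, hdq]
        have hr' : r = k * p + r % k := by
          conv_lhs => rw [← Nat.div_add_mod r k]
          rw [hdr]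
        by_cases hbb : ∃ jb, b = t jb
        · obtain ⟨jb, rfl⟩ := hbb
          have hrb : r = k * p + (jb : ℕ) := by
            have : layerStart k ℓ + r = layerStart k ℓ + (k * p + (jb : ℕ)) := by
              rw [← hb, hct'' jb, hchildpos]
            omega
          have hjj : (ja : ℕ) < (jb : ℕ) := by omega
          exact hmono (Fin.lt_def.2 hjj)
        · exfalso
          have hbe : c b = layerStart k ℓ + r := by
            rcases hbatch b with h | h
            · exact absurd h hbb
            · rw [← h.2]; exact hb
          have hcb : c b = childf k v (r % k) := by
            rw [hbe, hchildpos, ← hr']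
          have h1 : InSub k v (c b) := by
            rw [hcb]
            exact insub_child hk0 hv (Nat.mod_lt r hk0) (insub_refl k v)
          have h2 := hchip_at b h1
          rw [hcb] at h2
          have := childf_gt hk1 hv (r % k)
          omega
      · have hae : c a = layerStart k ℓ + q := by
          rcases hbatch a with h | h
          · exact absurd h hba
          · rw [← h.2]; exact ha
        by_cases hbb : ∃ jb, b = t jb
        · exfalso
          obtain ⟨jb, rfl⟩ := hbb
          have hrb : r = k * p + (jb : ℕ) := by
            have : layerStart k ℓ + r = layerStart k ℓ + (k * p + (jb : ℕ)) := by
              rw [← hb, hct'' jb, hchildpos]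
            omega
          have hdr : r / k = p := by
            rw [hrb, Nat.mul_add_div hk0, Nat.div_eq_of_lt jb.isLt]
            omega
          have hdq : q / k = p := by rw [hdiv, hdr]
          have hq' : q = k * p + q % k := by
            conv_lhs => rw [← Nat.div_add_mod q k]
            rw [hdq]
          have hca : c a = childf k v (q % k) := by
            rw [hae, hchildpos, ← hq']
          have h1 : InSub k v (c a) := by
            rw [hca]
            exact insub_child hk0 hv (Nat.mod_lt q hk0) (insub_refl k v)
          have h2 := hchip_at a h1
          rw [hca] at h2
          have := childf_gt hk1 hv (q % k)
          omega
        · have hbe : c b = layerStart k ℓ + r := by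
            rcases hbatch b with h | h
            · exact absurd h hbb
            · rw [← h.2]; exact hb
          exact hord a b q r hqr hrk hdiv hae hbe

lemma inv_init (hk : 2 ≤ k) (hℓ : 1 ≤ ℓ) : Inv k ℓ (fun _ : Fin (k ^ ℓ) => 1) := by
  refine ⟨fun _ => le_rfl, ?_, ?_⟩
  · intro u hu j hj
    have h : ∀ w, 2 ≤ w → sfilter k (fun _ : Fin (k ^ ℓ) => 1) w = ∅ := by
      intro w hw
      apply Finset.eq_empty_iff_forall_notMem.2
      intro i hi
      rw [mem_sfilter] at hi
      have := insub_le le_rfl hi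
      omega
    unfold scount
    rw [h _ (childf_ge_two k u j), h _ (childf_ge_two k u 0)]
  · intro a b q r hqr hrk hdiv ha hb
    exfalso
    have ha' : 1 = layerStart k ℓ + q := ha
    have := L_ge (by omega : 1 ≤ k) ℓ
    omega

lemma inv_reach (hk : 2 ≤ k) (hℓ : 1 ≤ ℓ) {c : Fin (k ^ ℓ) → ℕ} (h : Reachable k ℓ c) :
    Inv k ℓ c := by
  have h' : Relation.ReflTransGen (FireStep k (k ^ ℓ)) (fun _ => 1) c := h
  clear h
  induction h' with
  | refl => exact inv_init hk hℓ
  | tail _ hstep ih => exact inv_step hk hℓ ih hstep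

end Step

end CFAux

/-- `D_k(ℓ) ≤ k^(ℓ-1)`: every permutation attainable from `k^ℓ` chips has longest
strictly decreasing subsequence of length at most `k^(ℓ-1)`. -/
theorem stmt14 (k ℓ : ℕ) (hk : 2 ≤ k) (hℓ : 1 ≤ ℓ) :
    Dmax k ℓ ≤ k ^ (ℓ - 1) ∧
    ∀ σ : Equiv.Perm (Fin (k ^ ℓ)), Attainable k ℓ σ →
      ∀ d, HasDecSubseq (k ^ ℓ) (fun p => (σ p : ℕ)) d → d ≤ k ^ (ℓ - 1) := by

  have hk0 : 0 < k := by omega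
  have key : ∀ σ : Equiv.Perm (Fin (k ^ ℓ)), Attainable k ℓ σ →
      ∀ d, HasDecSubseq (k ^ ℓ) (fun p => (σ p : ℕ)) d → d ≤ k ^ (ℓ - 1) := by
    rintro σ ⟨c, hreach, -, hplace⟩ d ⟨pos, hposmono, hanti⟩
    obtain ⟨-, -, hord⟩ := CFAux.inv_reach hk hℓ hreach
    have hkl : k ^ ℓ = k ^ (ℓ - 1) * k := by
      rw [← pow_succ]
      congr 1
      omega
    have hg : ∀ t : Fin d, (pos t : ℕ) / k < k ^ (ℓ - 1) := by
      intro t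
      rw [Nat.div_lt_iff_lt_mul hk0, ← hkl]
      exact (pos t).isLt
    have hgmono : StrictMono (fun t : Fin d => (⟨(pos t : ℕ) / k, hg t⟩ : Fin (k ^ (ℓ - 1)))) := by
      intro t t' htt
      have h1 : (pos t : ℕ) < (pos t' : ℕ) := hposmono htt
      have h2 : (σ (pos t') : ℕ) < (σ (pos t) : ℕ) := hanti htt
      have hle : (pos t : ℕ) / k ≤ (pos t' : ℕ) / k := Nat.div_le_div_right (le_of_lt h1)
      have hne : (pos t : ℕ) / k ≠ (pos t' : ℕ) / k := by
        intro heq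
        have h3 : σ (pos t) < σ (pos t') :=
          hord (σ (pos t)) (σ (pos t')) (pos t) (pos t') h1 (pos t').isLt heq
            (hplace (pos t)) (hplace (pos t'))
        have h4 : (σ (pos t) : ℕ) < (σ (pos t') : ℕ) := h3
        omega
      exact Fin.lt_def.2 (lt_of_le_of_ne hle hne)
    have hcard := Fintype.card_le_of_injective _ hgmono.injective
    simpa using hcard
  refine ⟨?_, key⟩
  apply csSup_le'
  rintro d ⟨σ, hσ, hd⟩
  exact key σ hσ d hd
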